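/- Let X_1,…,X_n be a truncation-free collage system over a finite alphabet Σ deriving the string T = val(X_n). Define vOcc : {1,…,n} → ℕ by vOcc(n) = 1 and, for i < n, vOcc(i) = Σ_{j : X_j = X_i X_r} vOcc(j) + Σ_{j : X_j = X_ℓ X_i} vOcc(j) + Σ_{j : X_j = (X_i)^p} p·vOcc(j), where an assignment X_j = X_i X_i contributes 2·vOcc(j). Then for every integer q ≥ 2 and every string P over Σ with |P| = q: |Occ(T,P)| = Σ_{i : X_i = X_ℓ X_r} vOcc(i)·|Occ(suf(val(X_ℓ),q−1)·pre(val(X_r),q−1), P)| + Σ_{i : X_i = (X_s)^p, |val(X_s)| ≥ q} vOcc(i)·(p−1)·|Occ(suf(val(X_s),q−1)·pre(val(X_s),q−1), P)| + Σ_{i : X_i = (X_s)^p, |val(X_s)| < q} vOcc(i) · Σ_{j ∈ Occ(val(X_s)·pre(val(X_s)^{p−1}, q−1), P)} |{ m ∈ ℕ : j + m·|val(X_s)| + q − 1 ≤ p·|val(X_s)| }|. -/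

import Mathlib

/-- `Occ T P` is the set of (1-based) occurrence positions of `P` in `T`:
`{ i : 1 ≤ i ≤ |T|−|P|+1 and T[i:i+|P|−1] = P }`. -/
def Occ {α : Type*} [DecidableEq α] (T P : List α) : Finset ℕ :=
  (Finset.Icc 1 (T.length - P.length + 1)).filter
    (fun i => (T.drop (i - 1)).take P.length = P)

/-- `pre T k = T[1:min(k,|T|)]`, the prefix of `T` of length at most `k`. -/
def pre {α : Type*} (T : List α) (k : ℕ) : List α := T.take k

/-- `suf T k = T[|T|−min(k,|T|)+1:|T|]`, the suffix of `T` of length at most `k`. -/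
def suf {α : Type*} (T : List α) (k : ℕ) : List α := T.drop (T.length - k)

/-- `listPow w p` is the `p`-fold concatenation `w^p`. -/
def listPow {α : Type*} (w : List α) : ℕ → List α
  | 0 => []
  | p + 1 => w ++ listPow w p

/-- An assignment of a truncation-free collage system with variables indexed by `Fin n`:
a terminal symbol, a concatenation of two variables, or a repetition `(X_s)^p`. -/
inductive CExpr (α : Type*) (n : ℕ) where
  | term : α → CExpr α n
  | concat : Fin n → Fin n → CExpr α n
  | rep : Fin n → ℕ → CExpr α n

/-- How many times the assignment `e` references variable `i`
(`X_j = X_i X_i` counts twice, and `X_j = (X_i)^p` counts `p` times). -/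
def CExpr.refCount {α : Type*} {n : ℕ} (e : CExpr α n) (i : Fin n) : ℕ :=
  match e with
  | .term _ => 0
  | .concat l r => (if l = i then 1 else 0) + (if r = i then 1 else 0)
  | .rep s p => if s = i then p else 0

namespace QG

variable {α : Type*} [DecidableEq α]

def Occ0 (T P : List α) : Finset ℕ :=
  (Finset.range T.length).filter (fun i => (T.drop i).take P.length = P)

lemma occ0_le {T P : List α} {i : ℕ} (hP : P ≠ []) (h : (T.drop i).take P.length = P) :
    i + P.length ≤ T.length := by
  have h1 := congrArg List.length h
  simp only [List.length_take, List.length_drop] at h1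
  have h2 : 1 ≤ P.length := List.length_pos_iff.mpr hP
  omega

lemma mem_Occ0 {T P : List α} {i : ℕ} (hP : P ≠ []) :
    i ∈ Occ0 T P ↔ (T.drop i).take P.length = P := by
  simp only [Occ0, Finset.mem_filter, Finset.mem_range]
  constructor
  · exact fun h => h.2
  · intro h
    have := occ0_le hP h
    have h2 : 1 ≤ P.length := List.length_pos_iff.mpr hP
    exact ⟨by omega, h⟩

lemma Occ_eq_image {T P : List α} (hP : P ≠ []) :
    Occ T P = (Occ0 T P).image (· + 1) := by
  have h2 : 1 ≤ P.length := List.length_pos_iff.mpr hP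
  ext i
  simp only [Occ, Finset.mem_filter, Finset.mem_Icc, Finset.mem_image, mem_Occ0 hP]
  constructor
  · rintro ⟨⟨h1, _⟩, hsub⟩
    exact ⟨i - 1, hsub, by omega⟩
  · rintro ⟨a, hsub, rfl⟩
    have := occ0_le hP hsub
    refine ⟨⟨by omega, by omega⟩, by simpa using hsub⟩

lemma card_Occ {T P : List α} (hP : P ≠ []) : (Occ T P).card = (Occ0 T P).card := by
  rw [Occ_eq_image hP]
  exact Finset.card_image_of_injective _ (fun a b h => by omega)

lemma sum_Occ {T P : List α} (hP : P ≠ []) (g : ℕ → ℕ) :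
    ∑ j ∈ Occ T P, g j = ∑ r ∈ Occ0 T P, g (r + 1) := by
  rw [Occ_eq_image hP, Finset.sum_image (fun a _ b _ h => by omega)]

lemma Occ0_empty {T P : List α} (h : T.length < P.length) : Occ0 T P = ∅ := by
  rw [Finset.eq_empty_iff_forall_notMem]
  intro i hi
  rw [Occ0, Finset.mem_filter] at hi
  have hP : P ≠ [] := by intro h'; simp [h'] at h
  have := occ0_le hP hi.2
  omega

end QG

namespace QG

variable {α : Type*} [DecidableEq α]

lemma mem_Occ0' {T P : List α} {i q : ℕ} (hP : P.length = q) (hq : 1 ≤ q) :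
    i ∈ Occ0 T P ↔ (T.drop i).take q = P := by
  have hPne : P ≠ [] := by intro h; rw [h] at hP; simp at hP; omega
  rw [mem_Occ0 hPne, hP]

lemma occ0_le' {T P : List α} {i q : ℕ} (hP : P.length = q) (hq : 1 ≤ q)
    (h : i ∈ Occ0 T P) : i + q ≤ T.length := by
  have hPne : P ≠ [] := by intro h; rw [h] at hP; simp at hP; omega
  have := occ0_le hPne ((mem_Occ0 hPne).mp h)
  omega

-- occurrence fully inside left part
lemma f_left {u v : List α} {i q : ℕ} (h : i + q ≤ u.length) :
    ((u ++ v).drop i).take q = (u.drop i).take q := by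
  rw [List.drop_append, List.take_append]
  have h1 : (u.drop i).length = u.length - i := List.length_drop
  have h2 : i - u.length = 0 := by omega
  have h3 : q - (u.drop i).length = 0 := by omega
  simp only [h2, h3, List.drop_zero, List.take_zero, List.append_nil, List.take_nil]

-- occurrence fully inside right part
lemma f_right {u v : List α} {i q : ℕ} (h : u.length ≤ i) :
    ((u ++ v).drop i).take q = (v.drop (i - u.length)).take q := by
  rw [List.drop_append]
  have h2 : u.drop i = [] := List.drop_eq_nil_of_le (by omega)
  simp [h2]

-- crossing occurrence
lemma f_cross {u v : List α} {i q : ℕ} (h1 : i < u.length) (h2 : u.length < i + q) :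
    ((u ++ v).drop i).take q
      = ((suf u (q-1) ++ pre v (q-1)).drop (i - (u.length - (q-1)))).take q := by
  unfold suf pre
  set s := q - 1 with hs
  set d := u.length - s with hd
  have hid : d ≤ i := by omega
  rw [List.drop_append, List.drop_append]
  rw [List.drop_drop]
  first
  | rw [show (i - d + d) = i from by omega]
  | rw [show (d + (i - d)) = i from by omega]
  have lu : (u.drop i).length = u.length - i := List.length_drop
  have lud : (u.drop d).length = u.length - d := List.length_drop
  have e2 : i - u.length = 0 := by omega
  have e3 : i - d - (u.drop d).length = 0 := by omega
  rw [e2, e3]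
  simp only [List.drop_zero]
  rw [List.take_append, List.take_append]
  congr 1
  rw [List.take_take]
  congr 1
  omega

lemma card_occ0_append {u v P : List α} {q : ℕ} (hq : 1 ≤ q) (hP : P.length = q) :
    (Occ0 (u ++ v) P).card
      = (Occ0 u P).card + (Occ0 v P).card
        + (Occ0 (suf u (q-1) ++ pre v (q-1)) P).card := by
  have mo : ∀ (T : List α) (i : ℕ), i ∈ Occ0 T P ↔ (T.drop i).take q = P :=
    fun T i => mem_Occ0' hP hq
  set S := Occ0 (u ++ v) P with hS
  have hsplit1 := Finset.card_filter_add_card_filter_not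
    (s := S) (p := fun i => i + q ≤ u.length)
  have hsplit2 := Finset.card_filter_add_card_filter_not
    (s := S.filter (fun i => ¬ (i + q ≤ u.length))) (p := fun i => u.length ≤ i)
  have c1 : (S.filter (fun i => i + q ≤ u.length)).card = (Occ0 u P).card := by
    apply Finset.card_bij' (fun i _ => i) (fun i _ => i)
    · intro i hi
      rw [Finset.mem_filter, hS, mo] at hi
      rw [mo, ← f_left hi.2]
      exact hi.1
    · intro i hi
      rw [mo] at hi
      have hle : i + q ≤ u.length := by have := occ0_le' hP hq ((mo u i).mpr hi); omega
      rw [Finset.mem_filter, hS, mo, f_left hle]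
      exact ⟨hi, hle⟩
    · intros; rfl
    · intros; rfl
  have c2 : ((S.filter (fun i => ¬ (i + q ≤ u.length))).filter (fun i => u.length ≤ i)).card
      = (Occ0 v P).card := by
    apply Finset.card_bij' (fun i _ => i - u.length) (fun j _ => j + u.length)
    · intro i hi
      simp only [Finset.mem_filter, hS, mo] at hi
      obtain ⟨⟨hiS, _⟩, hle⟩ := hi
      rw [mo, ← f_right hle]
      exact hiS
    · intro j hj
      rw [mo] at hj
      have hjl := occ0_le' hP hq ((mo v j).mpr hj)
      simp only [Finset.mem_filter, hS, mo]
      refine ⟨⟨?_, by omega⟩, by omega⟩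
      rw [f_right (by omega : u.length ≤ j + u.length),
        show j + u.length - u.length = j from by omega]
      exact hj
    · intro i hi
      simp only [Finset.mem_filter] at hi
      omega
    · intros; omega
  have c3 : ((S.filter (fun i => ¬ (i + q ≤ u.length))).filter (fun i => ¬ u.length ≤ i)).card
      = (Occ0 (suf u (q-1) ++ pre v (q-1)) P).card := by
    have lsuf : (suf u (q-1)).length = min (q-1) u.length := by
      simp [suf, List.length_drop]; omega
    have lpre : (pre v (q-1)).length = min (q-1) v.length := by
      simp [pre, List.length_take]
    apply Finset.card_bij' (fun i _ => i - (u.length - (q-1)))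
      (fun j _ => j + (u.length - (q-1)))
    · intro i hi
      simp only [Finset.mem_filter, hS, mo] at hi
      obtain ⟨⟨hiS, hc1⟩, hc2⟩ := hi
      rw [mo, ← f_cross (by omega) (by omega)]
      exact hiS
    · intro j hj
      have hjl := occ0_le' hP hq hj
      rw [mo] at hj
      rw [List.length_append, lsuf, lpre] at hjl
      have hj1 : j < min (q-1) u.length := by omega
      have hcross1 : j + (u.length - (q-1)) < u.length := by omega
      have hcross2 : u.length < j + (u.length - (q-1)) + q := by omega
      simp only [Finset.mem_filter, hS, mo]
      refine ⟨⟨?_, by omega⟩, by omega⟩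
      rw [f_cross hcross1 hcross2,
        show j + (u.length - (q-1)) - (u.length - (q-1)) = j from by omega]
      exact hj
    · intro i hi
      simp only [Finset.mem_filter] at hi
      obtain ⟨⟨_, hc1⟩, hc2⟩ := hi
      omega
    · intro j hj
      have hjl := occ0_le' hP hq hj
      rw [List.length_append, lsuf, lpre] at hjl
      omega
  calc S.card = (S.filter (fun i => i + q ≤ u.length)).card
        + ((S.filter (fun i => ¬ (i + q ≤ u.length))).filter (fun i => u.length ≤ i)).card
        + ((S.filter (fun i => ¬ (i + q ≤ u.length))).filter (fun i => ¬ u.length ≤ i)).card := by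
        omega
    _ = _ := by rw [c1, c2, c3]

end QG

namespace QG

variable {α : Type*} [DecidableEq α]

lemma listPow_length (w : List α) (p : ℕ) : (listPow w p).length = p * w.length := by
  induction p with
  | zero => simp [listPow]
  | succ p ih => simp [listPow, ih]; ring

lemma listPow_succ' (w : List α) (p : ℕ) : listPow w (p+1) = listPow w p ++ w := by
  induction p with
  | zero => simp [listPow]
  | succ p ih =>
    show w ++ listPow w (p+1) = (w ++ listPow w p) ++ w
    rw [ih, List.append_assoc]

lemma listPow_nil (p : ℕ) : listPow ([] : List α) p = [] := by
  induction p with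
  | zero => rfl
  | succ p ih => simp [listPow, ih]

lemma occ0_pow_large {w P : List α} {q p : ℕ} (hq : 1 ≤ q) (hP : P.length = q)
    (hw : q ≤ w.length) :
    (Occ0 (listPow w p) P).card
      = p * (Occ0 w P).card
        + (p - 1) * (Occ0 (suf w (q-1) ++ pre w (q-1)) P).card := by
  induction p with
  | zero =>
    simp [listPow, Occ0]
  | succ p ih =>
    show (Occ0 (w ++ listPow w p) P).card = _
    rw [card_occ0_append hq hP, ih]
    cases p with
    | zero =>
      have h1 : listPow w 0 = ([] : List α) := rfl
      have h2 : (Occ0 (suf w (q-1) ++ pre ([] : List α) (q-1)) P).card = 0 := by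
        rw [Finset.card_eq_zero]
        apply Occ0_empty
        simp [suf, pre, List.length_drop, hP]
        omega
      rw [h1, h2]
      simp [Occ0]
    | succ p' =>
      have hpre : pre (listPow w (p'+1)) (q-1) = pre w (q-1) := by
        show (w ++ listPow w p').take (q-1) = w.take (q-1)
        exact List.take_append_of_le_length (by omega)
      rw [hpre]
      generalize (Occ0 w P).card = A
      generalize (Occ0 (suf w (q-1) ++ pre w (q-1)) P).card = B
      simp only [Nat.add_sub_cancel]
      ring

end QG

namespace QG

variable {α : Type*} [DecidableEq α]

lemma le_of_mul_le_mul {m p L : ℕ} (hL : 1 ≤ L) (h : m * L ≤ p * L) : m ≤ p :=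
  Nat.le_of_mul_le_mul_right h hL

lemma drop_pow_succ (w : List α) (p i : ℕ) :
    (listPow w (p+1)).drop (i + w.length) = (listPow w p).drop i := by
  show (w ++ listPow w p).drop (i + w.length) = _
  rw [List.drop_append]
  have h1 : w.drop (i + w.length) = [] := List.drop_eq_nil_of_le (by omega)
  have h2 : i + w.length - w.length = i := by omega
  simp [h1, h2]

lemma take_drop_pow_stable {w : List α} {q p i : ℕ} (h : i + q ≤ p * w.length) :
    ((listPow w (p+1)).drop i).take q = ((listPow w p).drop i).take q := by
  rw [listPow_succ', List.drop_append]
  have hlen : (listPow w p).length = p * w.length := listPow_length w p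
  have h2 : i - (listPow w p).length = 0 := by omega
  rw [h2, List.drop_zero, List.take_append]
  have h3 : ((listPow w p).drop i).length = p * w.length - i := by
    rw [List.length_drop, hlen]
  have h4 : q - ((listPow w p).drop i).length = 0 := by omega
  simp only [h4, List.take_zero, List.append_nil]

lemma shift1 {w : List α} {q p i : ℕ} (hq : 1 ≤ q) (h : i + w.length + q ≤ p * w.length) :
    ((listPow w p).drop (i + w.length)).take q = ((listPow w p).drop i).take q := by
  have hp : 1 ≤ p := by
    rcases Nat.eq_zero_or_pos p with h0 | h0
    · subst h0; simp at h; omega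
    · exact h0
  obtain ⟨r, rfl⟩ : ∃ r, p = r + 1 := ⟨p - 1, by omega⟩
  rw [drop_pow_succ]
  exact (take_drop_pow_stable (by
    have : (r + 1) * w.length = r * w.length + w.length := by ring
    omega)).symm

lemma shift {w : List α} {q p i : ℕ} (hq : 1 ≤ q) (m : ℕ)
    (h : i + m * w.length + q ≤ p * w.length) :
    ((listPow w p).drop (i + m * w.length)).take q = ((listPow w p).drop i).take q := by
  induction m with
  | zero => simp
  | succ m ih =>
    have hstep : (i + m * w.length) + w.length + q ≤ p * w.length := by
      have : (m + 1) * w.length = m * w.length + w.length := by ring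
      omega
    have e : i + (m + 1) * w.length = (i + m * w.length) + w.length := by ring
    rw [e, shift1 hq hstep]
    exact ih (by omega)

lemma mem_occ0_trunc {w P : List α} {q p r : ℕ} (hq : 1 ≤ q) (hP : P.length = q)
    (hp : 1 ≤ p) :
    r ∈ Occ0 (w ++ pre (listPow w (p-1)) (q-1)) P
      ↔ r < w.length ∧ ((listPow w p).drop r).take q = P := by
  set k := p - 1 with hk
  have hW : listPow w p = w ++ listPow w k := by
    rw [show p = k + 1 from by omega]; rfl
  have hX : w ++ pre (listPow w k) (q-1) = (listPow w p).take (w.length + (q-1)) := by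
    rw [hW, List.take_append, List.take_of_length_le (by omega),
      Nat.add_sub_cancel_left]
    rfl
  rw [mem_Occ0' hP hq, hX]
  set K := w.length + (q-1) with hK
  set W := listPow w p with hWW
  rw [List.drop_take, List.take_take]
  constructor
  · intro h
    have hr : r < w.length := by
      by_contra hr
      have hlen := congrArg List.length h
      rw [List.length_take, List.length_drop, hP] at hlen
      omega
    have hmin : min q (K - r) = q := by omega
    rw [hmin] at h
    exact ⟨hr, h⟩
  · rintro ⟨hr, h⟩
    have hmin : min q (K - r) = q := by omega
    rw [hmin]
    exact h

lemma occ_pow_small {w P : List α} {q p : ℕ} (hq : 1 ≤ q) (hP : P.length = q)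
    (hw : w.length < q) (hp : 1 ≤ p) :
    (Occ (listPow w p) P).card
      = ∑ j ∈ Occ (w ++ pre (listPow w (p-1)) (q-1)) P,
          {m : ℕ | j + m * w.length + q - 1 ≤ p * w.length}.ncard := by
  have hPne : P ≠ [] := by intro h; rw [h] at hP; simp at hP; omega
  rcases Nat.eq_zero_or_pos w.length with hw0 | hw1
  · -- w = []
    have hwnil : w = [] := List.length_eq_zero_iff.mp hw0
    subst hwnil
    have h1 : Occ0 (listPow ([] : List α) p) P = ∅ := by
      rw [listPow_nil]; exact Occ0_empty (by simp; omega)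
    have h2 : Occ0 (([] : List α) ++ pre (listPow ([] : List α) (p-1)) (q-1)) P = ∅ := by
      rw [listPow_nil]; exact Occ0_empty (by simp [pre]; omega)
    rw [card_Occ hPne, sum_Occ hPne, h1, h2]
    simp
  · -- w ≠ []
    rw [card_Occ hPne, sum_Occ hPne]
    have hlenW : (listPow w p).length = p * w.length := listPow_length w p
    have hsetcoe : ∀ r : ℕ,
        {m : ℕ | (r+1) + m * w.length + q - 1 ≤ p * w.length}
          = ↑((Finset.range (p+1)).filter (fun m => r + m * w.length + q ≤ p * w.length)) := by
      intro r
      ext m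
      simp only [Set.mem_setOf_eq, Finset.coe_filter, Finset.mem_range, Set.mem_setOf_eq]
      constructor
      · intro h
        have h' : r + m * w.length + q ≤ p * w.length := by omega
        have hm : m ≤ p := le_of_mul_le_mul hw1 (by omega)
        exact ⟨by omega, h'⟩
      · rintro ⟨_, h⟩; omega
    have hmain : Occ0 (listPow w p) P
        = (Occ0 (w ++ pre (listPow w (p-1)) (q-1)) P).biUnion (fun r =>
            ((Finset.range (p+1)).filter (fun m => r + m * w.length + q ≤ p * w.length)).image
              (fun m => r + m * w.length)) := by
      ext a
      simp only [Finset.mem_biUnion, Finset.mem_image, Finset.mem_filter, Finset.mem_range]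
      constructor
      · intro ha
        have haq : a + q ≤ p * w.length := by
          have := occ0_le' hP hq ha
          omega
        rw [mem_Occ0' hP hq] at ha
        have hmd := Nat.mod_add_div a w.length
        have hcomm : w.length * (a / w.length) = (a / w.length) * w.length := by ring
        have heq : a % w.length + (a / w.length) * w.length = a := by omega
        refine ⟨a % w.length, ?_, a / w.length, ⟨?_, ?_⟩, by omega⟩
        · rw [mem_occ0_trunc hq hP hp]
          refine ⟨Nat.mod_lt a hw1, ?_⟩
          have hsh := shift (w := w) (p := p) (i := a % w.length) hq (a / w.length) (by omega)
          rw [heq] at hsh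
          rw [← ha]
          exact hsh.symm
        · have : a / w.length ≤ p := le_of_mul_le_mul hw1 (by omega)
          omega
        · omega
      · rintro ⟨r, hr, m, ⟨hm, hc⟩, rfl⟩
        rw [mem_occ0_trunc hq hP hp] at hr
        rw [mem_Occ0' hP hq]
        rw [shift hq m hc]
        exact hr.2
    rw [hmain, Finset.card_biUnion]
    · apply Finset.sum_congr rfl
      intro r hr
      rw [hsetcoe r, Set.ncard_coe_finset]
      apply Finset.card_image_of_injOn
      intro m1 h1 m2 h2 he
      have he' : r + m1 * w.length = r + m2 * w.length := he
      have : m1 * w.length = m2 * w.length := by omega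
      exact Nat.eq_of_mul_eq_mul_right hw1 this
    · intro r1 h1 r2 h2 hne
      rw [Finset.mem_coe, mem_occ0_trunc hq hP hp] at h1 h2
      rw [Function.onFun, Finset.disjoint_left]
      intro x hx1 hx2
      simp only [Finset.mem_image, Finset.mem_filter, Finset.mem_range] at hx1 hx2
      obtain ⟨m1, _, he1⟩ := hx1
      obtain ⟨m2, _, he2⟩ := hx2
      apply hne
      have e1 : (r1 + m1 * w.length) % w.length = r1 := by
        rw [Nat.add_mul_mod_self_right, Nat.mod_eq_of_lt h1.1]
      have e2 : (r2 + m2 * w.length) % w.length = r2 := by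
        rw [Nat.add_mul_mod_self_right, Nat.mod_eq_of_lt h2.1]
      rw [← e1, ← e2, he1, he2]

end QG

namespace QG

lemma dag_count {n : ℕ} (hn : 0 < n) (rc : Fin n → Fin n → ℕ)
    (O cross vOcc : Fin n → ℕ)
    (hrec : ∀ i, O i = (∑ k, rc i k * O k) + cross i)
    (hlast : vOcc ⟨n-1, Nat.sub_lt hn Nat.one_pos⟩ = 1)
    (hv : ∀ i : Fin n, (i:ℕ)+1 < n → vOcc i = ∑ j, vOcc j * rc j i)
    (hzero : ∀ i, rc i ⟨n-1, Nat.sub_lt hn Nat.one_pos⟩ = 0) :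
    O ⟨n-1, Nat.sub_lt hn Nat.one_pos⟩ = ∑ i, vOcc i * cross i := by
  set L : Fin n := ⟨n-1, by omega⟩ with hLdef
  have key : ∑ i, vOcc i * O i
      = (∑ k ∈ Finset.univ.erase L, vOcc k * O k) + ∑ i, vOcc i * cross i := by
    calc ∑ i, vOcc i * O i
        = ∑ i, (vOcc i * ∑ k, rc i k * O k + vOcc i * cross i) := by
          apply Finset.sum_congr rfl
          intro i _
          rw [hrec i, Nat.mul_add]
      _ = (∑ i, ∑ k, vOcc i * (rc i k * O k)) + ∑ i, vOcc i * cross i := by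
          rw [Finset.sum_add_distrib]
          congr 1
          exact Finset.sum_congr rfl (fun i _ => Finset.mul_sum _ _ _)
      _ = ∑ k, (∑ i, vOcc i * rc i k) * O k + ∑ i, vOcc i * cross i := by
          congr 1
          rw [Finset.sum_comm]
          apply Finset.sum_congr rfl
          intro k _
          rw [Finset.sum_mul]
          apply Finset.sum_congr rfl
          intro i _
          ring
      _ = (∑ k ∈ Finset.univ.erase L, vOcc k * O k) + ∑ i, vOcc i * cross i := by
          congr 1
          rw [← Finset.add_sum_erase Finset.univ _ (Finset.mem_univ L)]
          have hL0 : (∑ i, vOcc i * rc i L) = 0 := by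
            apply Finset.sum_eq_zero
            intro i _
            rw [hzero i]
            ring
          rw [hL0, Nat.zero_mul, Nat.zero_add]
          apply Finset.sum_congr rfl
          intro k hk
          have hkL : k ≠ L := (Finset.mem_erase.mp hk).1
          have hklt : (k:ℕ)+1 < n := by
            have h1 := k.isLt
            have h2 : (k:ℕ) ≠ n-1 := by
              intro h
              exact hkL (Fin.ext h)
            omega
          rw [← hv k hklt]
  have key2 : ∑ i, vOcc i * O i
      = O L + ∑ k ∈ Finset.univ.erase L, vOcc k * O k := by
    rw [← Finset.add_sum_erase Finset.univ _ (Finset.mem_univ L), hlast, Nat.one_mul]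
  omega

end QG

/-- `q`-gram frequencies on a truncation-free collage system.
`expr` gives the assignments (each referring only to earlier variables, with exponents
`p ≥ 2` for repetitions), `val` their derived strings, `T = val(X_n)`, and `vOcc` counts
occurrences of each variable in the derivation tree: `vOcc(n) = 1` and for `i < n`,
`vOcc(i) = Σ_{j : X_j = X_i X_r} vOcc(j) + Σ_{j : X_j = X_ℓ X_i} vOcc(j)
 + Σ_{j : X_j = (X_i)^p} p·vOcc(j)`.
Then `|Occ(T,P)|` equals the sum over all variables of: for `X_i = X_ℓ X_r`,
`vOcc(i)·|Occ(suf(val(X_ℓ),q−1)·pre(val(X_r),q−1),P)|`; for `X_i = (X_s)^p` with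
`|val(X_s)| ≥ q`, `vOcc(i)·(p−1)·|Occ(suf(val(X_s),q−1)·pre(val(X_s),q−1),P)|`; and for
`X_i = (X_s)^p` with `|val(X_s)| < q`,
`vOcc(i)·Σ_{j ∈ Occ(val(X_s)·pre(val(X_s)^{p−1},q−1),P)}
  |{ m ∈ ℕ : j + m·|val(X_s)| + q − 1 ≤ p·|val(X_s)| }|`. -/
theorem qgram_frequencies_on_truncation_free_collage {α : Type*} [Fintype α] [DecidableEq α]
    (n : ℕ) (hn : 0 < n)
    (expr : Fin n → CExpr α n) (val : Fin n → List α) (vOcc : Fin n → ℕ)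
    (hwf : ∀ i : Fin n, match expr i with
      | .term _ => True
      | .concat l r => l < i ∧ r < i
      | .rep s p => s < i ∧ 2 ≤ p)
    (hval : ∀ i : Fin n, val i = match expr i with
      | .term a => [a]
      | .concat l r => val l ++ val r
      | .rep s p => listPow (val s) p)
    (hlast : vOcc ⟨n - 1, by omega⟩ = 1)
    (hvOcc : ∀ i : Fin n, (i : ℕ) + 1 < n →
      vOcc i = ∑ j : Fin n, vOcc j * (expr j).refCount i)
    (q : ℕ) (hq : 2 ≤ q) (P : List α) (hP : P.length = q) :
    (Occ (val ⟨n - 1, by omega⟩) P).card =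
      ∑ i : Fin n, vOcc i *
        (match expr i with
         | .term _ => 0
         | .concat l r =>
            (Occ (suf (val l) (q - 1) ++ pre (val r) (q - 1)) P).card
         | .rep s p =>
            if q ≤ (val s).length then
              (p - 1) * (Occ (suf (val s) (q - 1) ++ pre (val s) (q - 1)) P).card
            else
              ∑ j ∈ Occ (val s ++ pre (listPow (val s) (p - 1)) (q - 1)) P,
                {m : ℕ | j + m * (val s).length + q - 1 ≤ p * (val s).length}.ncard) := by
  have hq1 : 1 ≤ q := by omega
  have hPne : P ≠ [] := by intro h; rw [h] at hP; simp at hP; omega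
  set cross : Fin n → ℕ := fun i =>
    (match expr i with
     | .term _ => 0
     | .concat l r =>
        (Occ (suf (val l) (q - 1) ++ pre (val r) (q - 1)) P).card
     | .rep s p =>
        if q ≤ (val s).length then
          (p - 1) * (Occ (suf (val s) (q - 1) ++ pre (val s) (q - 1)) P).card
        else
          ∑ j ∈ Occ (val s ++ pre (listPow (val s) (p - 1)) (q - 1)) P,
            {m : ℕ | j + m * (val s).length + q - 1 ≤ p * (val s).length}.ncard) with hcross
  set O : Fin n → ℕ := fun i => (Occ (val i) P).card with hO
  set rc : Fin n → Fin n → ℕ := fun j i => (expr j).refCount i with hrc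
  -- local recursion
  have hrec : ∀ i, O i = (∑ k, rc i k * O k) + cross i := by
    intro i
    have hvi := hval i
    have hwi := hwf i
    rcases h : expr i with a | ⟨l, r⟩ | ⟨s, p⟩
    · -- term
      rw [h] at hvi
      have hOi : O i = 0 := by
        rw [hO]
        simp only [hvi]
        rw [QG.card_Occ hPne, Finset.card_eq_zero]
        apply QG.Occ0_empty
        simp [hP]; omega
      have hsum : (∑ k, rc i k * O k) = 0 := by
        apply Finset.sum_eq_zero
        intro k _
        rw [hrc]
        simp [h, CExpr.refCount]
      have hcr : cross i = 0 := by rw [hcross]; simp [h]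
      rw [hOi, hsum, hcr]
    · -- concat
      rw [h] at hvi
      have hsum : (∑ k, rc i k * O k) = O l + O r := by
        rw [hrc]
        simp only [h, CExpr.refCount]
        rw [show (∑ k : Fin n, ((if l = k then 1 else 0) + (if r = k then 1 else 0)) * O k)
            = (∑ k : Fin n, (if l = k then O k else 0))
              + (∑ k : Fin n, (if r = k then O k else 0)) from by
          rw [← Finset.sum_add_distrib]
          apply Finset.sum_congr rfl
          intro k _
          by_cases h1 : l = k <;> by_cases h2 : r = k <;> simp [h1, h2, two_mul]]
        rw [Finset.sum_ite_eq, Finset.sum_ite_eq]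
        simp
      have hcr : cross i = (Occ (suf (val l) (q - 1) ++ pre (val r) (q - 1)) P).card := by
        rw [hcross]
        simp only [h]
      have hOi : O i = O l + O r
          + (Occ (suf (val l) (q - 1) ++ pre (val r) (q - 1)) P).card := by
        rw [hO]
        simp only [hvi]
        rw [QG.card_Occ hPne, QG.card_occ0_append hq1 hP,
          ← QG.card_Occ hPne, ← QG.card_Occ hPne, ← QG.card_Occ hPne]
      rw [hOi, hsum, hcr]
    · -- rep
      rw [h] at hvi hwi
      obtain ⟨hsi, hp2⟩ := hwi
      have hsum : (∑ k, rc i k * O k) = p * O s := by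
        rw [hrc]
        simp only [h, CExpr.refCount]
        rw [show (∑ k : Fin n, (if s = k then p else 0) * O k)
            = (∑ k : Fin n, (if s = k then p * O k else 0)) from by
          apply Finset.sum_congr rfl
          intro k _
          by_cases h1 : s = k <;> simp [h1]]
        rw [Finset.sum_ite_eq]
        simp
      by_cases hql : q ≤ (val s).length
      · have hcr : cross i = (p - 1) * (Occ (suf (val s) (q-1) ++ pre (val s) (q-1)) P).card := by
          rw [hcross]
          simp only [h, if_pos hql]
        have hOi : O i = p * O s
            + (p - 1) * (Occ (suf (val s) (q-1) ++ pre (val s) (q-1)) P).card := by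
          rw [hO]
          simp only [hvi]
          rw [QG.card_Occ hPne, QG.occ0_pow_large hq1 hP hql,
            ← QG.card_Occ hPne, ← QG.card_Occ hPne]
        rw [hOi, hsum, hcr]
      · have hql' : (val s).length < q := by omega
        have hOs : O s = 0 := by
          rw [hO]
          simp only []
          rw [QG.card_Occ hPne, Finset.card_eq_zero]
          apply QG.Occ0_empty
          omega
        have hcr : cross i
            = ∑ j ∈ Occ (val s ++ pre (listPow (val s) (p - 1)) (q - 1)) P,
                {m : ℕ | j + m * (val s).length + q - 1 ≤ p * (val s).length}.ncard := by
          rw [hcross]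
          simp only [h, if_neg hql]
        have hOi : O i
            = ∑ j ∈ Occ (val s ++ pre (listPow (val s) (p - 1)) (q - 1)) P,
                {m : ℕ | j + m * (val s).length + q - 1 ≤ p * (val s).length}.ncard := by
          rw [hO]
          simp only [hvi]
          exact QG.occ_pow_small hq1 hP hql' (by omega)
        rw [hOi, hsum, hcr, hOs]
        simp
  -- rc into the last variable is zero
  have hzero : ∀ i, rc i ⟨n - 1, by omega⟩ = 0 := by
    intro i
    have hwi := hwf i
    have hilt := i.isLt
    rcases h : expr i with a | ⟨l, r⟩ | ⟨s, p⟩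
    · simp [hrc, h, CExpr.refCount]
    · rw [h] at hwi
      obtain ⟨hl, hr⟩ := hwi
      have h1 : l ≠ (⟨n - 1, by omega⟩ : Fin n) := by
        intro he
        have hx := Fin.lt_def.mp hl
        rw [he] at hx
        simp at hx
        omega
      have h2 : r ≠ (⟨n - 1, by omega⟩ : Fin n) := by
        intro he
        have hx := Fin.lt_def.mp hr
        rw [he] at hx
        simp at hx
        omega
      simp [hrc, h, CExpr.refCount, h1, h2]
    · rw [h] at hwi
      obtain ⟨hs, _⟩ := hwi
      have h1 : s ≠ (⟨n - 1, by omega⟩ : Fin n) := by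
        intro he
        have hx := Fin.lt_def.mp hs
        rw [he] at hx
        simp at hx
        omega
      simp [hrc, h, CExpr.refCount, h1]
  exact QG.dag_count hn rc O cross vOcc hrec hlast hvOcc hzero
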